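/- Let k be a commutative ring with unit, Λ a finite meet semilattice (regarded as a commutative semigroup under x·y := x ⊓ y), and suppose m : Λ × Λ → k satisfies the Möbius-function property: for all z ≤ x in Λ, Σ_{y ∈ Λ, z ≤ y ≤ x} m(y, x) equals 1 if z = x and 0 otherwise. For x ∈ Λ define ε_x := Σ_{z ∈ Λ, z ≤ x} m(z, x)·z in the semigroup algebra kΛ. Then: (a) ε_x·ε_x = ε_x for every x; (b) ε_x·ε_y = 0 whenever x ≠ y; (c) Σ_{x ∈ Λ} ε_x is a two-sided multiplicative identity of kΛ; (d) for every y ∈ Λ (viewed as a basis element of kΛ) and x ∈ Λ, y·ε_x = ε_x if x ≤ y and y·ε_x = 0 otherwise. -/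

import Mathlib

open Finset in
/-- The element `ε_x = Σ_{z ≤ x} μ(z,x)·z` of the semigroup algebra of a finite
meet semilattice. -/
noncomputable def mobiusIdem {k : Type*} [CommRing k] {Λ : Type*} [Fintype Λ] [SemilatticeInf Λ]
    [DecidableRel ((· ≤ ·) : Λ → Λ → Prop)] (m : Λ → Λ → k) (x : Λ) :
    MonoidAlgebra k Λ :=
  ∑ z ∈ univ.filter (fun z => z ≤ x), MonoidAlgebra.single z (m z x)

open Finset

section Aux

variable {k : Type*} [CommRing k] {Λ : Type*} [Fintype Λ] [SemilatticeInf Λ]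
    [DecidableEq Λ] [DecidableRel ((· ≤ ·) : Λ → Λ → Prop)]

/-- Row-sum Möbius property, valid without the hypothesis `z ≤ x`. -/
lemma mobius_aux_S (m : Λ → Λ → k)
    (hm : ∀ z x : Λ, z ≤ x →
      (∑ y ∈ univ.filter (fun y => z ≤ y ∧ y ≤ x), m y x) = if z = x then 1 else 0) :
    ∀ z x : Λ, (∑ y ∈ univ.filter (fun y => z ≤ y ∧ y ≤ x), m y x) = if z = x then 1 else 0 := by
  intro z x
  by_cases h : z ≤ x
  · exact hm z x h
  · rw [Finset.filter_false_of_mem, Finset.sum_empty, if_neg]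
    · rintro rfl; exact h le_rfl
    · rintro y - ⟨h1, h2⟩; exact h (h1.trans h2)

/-- Column-sum Möbius property, deduced from the row-sum property via
`Matrix.mul_eq_one_comm`. -/
lemma mobius_aux_col (m : Λ → Λ → k)
    (hm : ∀ z x : Λ, z ≤ x →
      (∑ y ∈ univ.filter (fun y => z ≤ y ∧ y ≤ x), m y x) = if z = x then 1 else 0) :
    ∀ z t : Λ, (∑ x ∈ univ.filter (fun x => z ≤ x ∧ x ≤ t), m z x) = if z = t then 1 else 0 := by
  have hZM : (Matrix.of fun a b : Λ => if a ≤ b then (1:k) else 0) *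
      (Matrix.of fun a b : Λ => if a ≤ b then m a b else 0) = 1 := by
    ext z x
    rw [Matrix.mul_apply, Matrix.one_apply, ← mobius_aux_S m hm z x, Finset.sum_filter]
    refine Finset.sum_congr rfl fun y _ => ?_
    simp only [Matrix.of_apply]
    split_ifs with h1 <;> simp_all
  have hMZ := Matrix.ext_iff.mpr (mul_eq_one_comm.mp hZM)
  intro z t
  have h := hMZ z t
  rw [Matrix.mul_apply, Matrix.one_apply] at h
  rw [← h, Finset.sum_filter]
  refine Finset.sum_congr rfl fun y _ => ?_
  simp only [Matrix.of_apply]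
  split_ifs with h1 <;> simp_all

/-- Möbius inversion: the sum of the `ε_w` over `w ≤ t` is the basis element `t`. -/
lemma mobius_aux_K (m : Λ → Λ → k)
    (hcol : ∀ z t : Λ, (∑ x ∈ univ.filter (fun x => z ≤ x ∧ x ≤ t), m z x)
        = if z = t then 1 else 0)
    (t : Λ) :
    (∑ w ∈ univ.filter (fun w => w ≤ t), mobiusIdem m w) = MonoidAlgebra.single t (1:k) := by
  ext a
  rw [MonoidAlgebra.coeff_sum, Finsupp.finset_sum_apply]
  have h1 : ∀ w : Λ, (mobiusIdem m w).coeff a = if a ≤ w then m a w else 0 := by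
    intro w
    rw [mobiusIdem, MonoidAlgebra.coeff_sum, Finsupp.finset_sum_apply]
    have : ∀ z : Λ, (MonoidAlgebra.single z (m z w) : MonoidAlgebra k Λ).coeff a
        = if z = a then m z w else 0 := fun z => Finsupp.single_apply
    rw [Finset.sum_congr rfl fun z _ => this z, Finset.sum_ite_eq' _ a (fun z => m z w)]
    simp [Finset.mem_filter]
  rw [Finset.sum_congr rfl fun w _ => h1 w, ← Finset.sum_filter, Finset.filter_filter]
  have : (univ.filter fun w => w ≤ t ∧ a ≤ w) = univ.filter fun w => a ≤ w ∧ w ≤ t := by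
    simp [and_comm]
  rw [this, hcol a t, MonoidAlgebra.coeff_single, Finsupp.single_apply]
  simp [eq_comm]

/-- Orthogonality/idempotence of the `ε_x`. -/
lemma mobius_aux_P [Mul Λ] (hmul : ∀ x y : Λ, x * y = x ⊓ y) (m : Λ → Λ → k)
    (hS : ∀ z x : Λ, (∑ y ∈ univ.filter (fun y => z ≤ y ∧ y ≤ x), m y x) = if z = x then 1 else 0)
    (hK : ∀ t : Λ, (∑ w ∈ univ.filter (fun w => w ≤ t), mobiusIdem m w)
        = MonoidAlgebra.single t (1:k))
    (x x' : Λ) :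
    mobiusIdem m x * mobiusIdem m x' = if x = x' then mobiusIdem m x else 0 := by
  have step1 : mobiusIdem m x * mobiusIdem m x' =
      ∑ y ∈ univ.filter (fun y => y ≤ x), ∑ z ∈ univ.filter (fun z => z ≤ x'),
        ∑ w ∈ univ, ((if w ≤ y then m y x else 0) * (if w ≤ z then m z x' else 0))
          • mobiusIdem m w := by
    rw [mobiusIdem, mobiusIdem, Finset.sum_mul_sum]
    refine Finset.sum_congr rfl fun y _ => Finset.sum_congr rfl fun z _ => ?_
    rw [MonoidAlgebra.single_mul_single, hmul]
    have e1 : MonoidAlgebra.single (y ⊓ z) (m y x * m z x')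
        = (m y x * m z x') • MonoidAlgebra.single (y ⊓ z) (1:k) := by
      rw [MonoidAlgebra.smul_single', mul_one]
    rw [e1, ← hK (y ⊓ z), Finset.smul_sum, Finset.sum_filter]
    refine Finset.sum_congr rfl fun w _ => ?_
    by_cases h : w ≤ y ⊓ z
    · rw [if_pos h, if_pos (le_inf_iff.mp h).1, if_pos (le_inf_iff.mp h).2]
    · rw [if_neg h]
      rcases (not_and_or.mp (fun hc => h (le_inf_iff.mpr hc))) with h' | h' <;>
        rw [if_neg h'] <;> simp
  rw [step1, Finset.sum_congr rfl fun y _ => Finset.sum_comm, Finset.sum_comm]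
  have helper : ∀ (s t : Finset Λ) (a b : Λ → k) (e : MonoidAlgebra k Λ),
      (∑ y ∈ s, ∑ z ∈ t, (a y * b z) • e) = ((∑ y ∈ s, a y) * (∑ z ∈ t, b z)) • e := by
    intro s t a b e
    rw [Finset.sum_mul_sum, Finset.sum_smul]
    exact Finset.sum_congr rfl fun y _ => Finset.sum_smul.symm
  have inner : ∀ (w x : Λ), (∑ y ∈ univ.filter (fun y => y ≤ x), if w ≤ y then m y x else 0)
      = if w = x then 1 else 0 := by
    intro w x
    rw [← Finset.sum_filter, Finset.filter_filter,
      show (univ.filter fun y => y ≤ x ∧ w ≤ y) = univ.filter fun y => w ≤ y ∧ y ≤ x from by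
        simp [and_comm]]
    exact hS w x
  rw [Finset.sum_congr rfl fun w _ => (helper _ _ _ _ _).trans
    (by rw [inner w x, inner w x'])]
  have e2 : ∀ w ∈ (univ : Finset Λ),
      (((if w = x then (1:k) else 0) * (if w = x' then 1 else 0)) • mobiusIdem m w)
        = if w = x then ((if w = x' then (1:k) else 0) • mobiusIdem m w) else 0 := by
    intro w _; split_ifs <;> simp
  rw [Finset.sum_congr rfl e2, Finset.sum_ite_eq' univ x, if_pos (mem_univ x)]
  split_ifs <;> simp

end Aux

open Finset in
/-- For a finite meet semilattice `Λ` regarded as a semigroup under `⊓`, the elements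
`ε_x = Σ_{z ≤ x} μ(z,x)·z` built from the Möbius function form a complete set of
orthogonal idempotents of `kΛ` summing to a two-sided identity, and
`y·ε_x = ε_x` if `x ≤ y`, and `0` otherwise. -/
theorem stmt9 {k : Type*} [CommRing k] {Λ : Type*} [Fintype Λ] [SemilatticeInf Λ]
    [DecidableEq Λ] [DecidableRel ((· ≤ ·) : Λ → Λ → Prop)]
    [Mul Λ] (hmul : ∀ x y : Λ, x * y = x ⊓ y)
    (m : Λ → Λ → k)
    (hm : ∀ z x : Λ, z ≤ x →
      (∑ y ∈ univ.filter (fun y => z ≤ y ∧ y ≤ x), m y x) = if z = x then 1 else 0) :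
    (∀ x : Λ, mobiusIdem m x * mobiusIdem m x = mobiusIdem m x) ∧
    (∀ x y : Λ, x ≠ y → mobiusIdem m x * mobiusIdem m y = 0) ∧
    (∀ f : MonoidAlgebra k Λ,
      (∑ x : Λ, mobiusIdem m x) * f = f ∧ f * (∑ x : Λ, mobiusIdem m x) = f) ∧
    (∀ y x : Λ, MonoidAlgebra.single y (1 : k) * mobiusIdem m x =
      if x ≤ y then mobiusIdem m x else 0) := by
  have hS := mobius_aux_S m hm
  have hK := mobius_aux_K m (mobius_aux_col m hm)
  have hP := mobius_aux_P hmul m hS hK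
  -- part (d)
  have hd : ∀ y x : Λ, MonoidAlgebra.single y (1 : k) * mobiusIdem m x =
      if x ≤ y then mobiusIdem m x else 0 := by
    intro y x
    rw [← hK y, Finset.sum_mul, Finset.sum_congr rfl fun w _ => hP w x,
      Finset.sum_ite_eq' _ x (fun w => mobiusIdem m w)]
    simp [Finset.mem_filter]
  -- commutation of ε_x with basis elements
  have comm1 : ∀ (z a : Λ) (c : k), MonoidAlgebra.single z c * MonoidAlgebra.single a (1:k)
      = MonoidAlgebra.single a (1:k) * MonoidAlgebra.single z c := by
    intro z a c
    rw [MonoidAlgebra.single_mul_single, MonoidAlgebra.single_mul_single, hmul, hmul,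
      inf_comm, one_mul, mul_one]
  have commE : ∀ (x a : Λ), mobiusIdem m x * MonoidAlgebra.single a (1:k)
      = MonoidAlgebra.single a (1:k) * mobiusIdem m x := by
    intro x a
    rw [mobiusIdem, Finset.sum_mul, Finset.mul_sum]
    exact Finset.sum_congr rfl fun z _ => comm1 z a _
  -- the sum of all ε_x acts as identity on basis elements
  have hid1 : ∀ a : Λ, MonoidAlgebra.single a (1:k) * (∑ x : Λ, mobiusIdem m x)
      = MonoidAlgebra.single a 1 := by
    intro a
    rw [Finset.mul_sum, Finset.sum_congr rfl fun x _ => hd a x, ← Finset.sum_filter, hK a]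
  have hid2 : ∀ a : Λ, (∑ x : Λ, mobiusIdem m x) * MonoidAlgebra.single a (1:k)
      = MonoidAlgebra.single a 1 := by
    intro a
    rw [Finset.sum_mul, Finset.sum_congr rfl fun x _ => commE x a, ← Finset.mul_sum, hid1 a]
  refine ⟨fun x => by rw [hP x x, if_pos rfl],
    fun x y hxy => by rw [hP x y, if_neg hxy],
    fun f => ?_, hd⟩
  induction f using MonoidAlgebra.induction_linear with
  | zero => simp
  | add f g hf hg =>
    exact ⟨by rw [mul_add, hf.1, hg.1], by rw [add_mul, hf.2, hg.2]⟩
  | single a b =>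
    have e1 : (MonoidAlgebra.single a b : MonoidAlgebra k Λ)
        = b • MonoidAlgebra.single a (1:k) := by
      rw [MonoidAlgebra.smul_single', mul_one]
    constructor
    · rw [e1, mul_smul_comm, hid2 a]
    · rw [e1, smul_mul_assoc, hid1 a]
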